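/- arXiv:2309.10760 — 2 statements merged into one kernel-verified Lean document; each statement's English description precedes it below -/
import Mathlib

section
/- Let X be a complete median space in which every interval [a,b] is compact. Then for any two nonempty compact convex subsets C₁, C₂ of X, the convex hull Conv(C₁ ∪ C₂) is compact. In particular, the convex hull of any nonempty finite subset of X is compact. -/
/-- The interval `[a,b]` in a metric space: points `x` with `d(a,x) + d(x,b) = d(a,b)`. -/
def mInterval {X : Type*} [MetricSpace X] (a b : X) : Set X :=
  {x : X | dist a x + dist x b = dist a b}

/-- A median space: every triple of points has a unique median point. -/
def IsMedianSpace (X : Type*) [MetricSpace X] : Prop :=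
  ∀ a b c : X, ∃! m : X,
    m ∈ mInterval a b ∩ mInterval b c ∩ mInterval a c

/-- A subset is (median) convex if it contains the interval between any two of its points. -/
def MConvex {X : Type*} [MetricSpace X] (C : Set X) : Prop :=
  ∀ a ∈ C, ∀ b ∈ C, mInterval a b ⊆ C

/-- A halfspace: a convex subset with convex complement. -/
def IsHalfspace {X : Type*} [MetricSpace X] (h : Set X) : Prop :=
  MConvex h ∧ MConvex hᶜ

/-- Two subsets are transverse if the four pairwise intersections of them and
their complements are all nonempty. -/
def TransverseSets {X : Type*} (h₁ h₂ : Set X) : Prop :=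
  (h₁ ∩ h₂).Nonempty ∧ (h₁ᶜ ∩ h₂).Nonempty ∧ (h₁ ∩ h₂ᶜ).Nonempty ∧ (h₁ᶜ ∩ h₂ᶜ).Nonempty

/-- `X` has rank `n`: there are `n` pairwise transverse halfspaces but not `n+1`. -/
def HasMedianRank (X : Type*) [MetricSpace X] (n : ℕ) : Prop :=
  (∃ h : Fin n → Set X, (∀ i, IsHalfspace (h i)) ∧
    ∀ i j, i ≠ j → TransverseSets (h i) (h j)) ∧
  ¬ ∃ h : Fin (n + 1) → Set X, (∀ i, IsHalfspace (h i)) ∧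
    ∀ i j, i ≠ j → TransverseSets (h i) (h j)

/-- Median convex hull: intersection of all convex subsets containing `A`. -/
def mConvexHull {X : Type*} [MetricSpace X] (A : Set X) : Set X :=
  ⋂₀ {C : Set X | MConvex C ∧ A ⊆ C}

/-- The hyperplane bounding a halfspace `h`. -/
def mHyperplane {X : Type*} [MetricSpace X] (h : Set X) : Set X :=
  closure h ∩ closure hᶜ

/-- Depth of the halfspace `h` in the subset `A`:
`sup { d(x, ĥ) | x ∈ h ∩ A }`. -/
noncomputable def mDepth {X : Type*} [MetricSpace X] (A h : Set X) : ℝ :=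
  sSup ((fun x => Metric.infDist x (mHyperplane h)) '' (h ∩ A))

/-- `π` is the nearest-point projection onto `C`. -/
def IsNearestPointProj {X : Type*} [MetricSpace X] (C : Set X) (π : X → X) : Prop :=
  ∀ x : X, π x ∈ C ∧ dist x (π x) = Metric.infDist x C

/-- The halfspace `h` separates the points `x` and `y`. -/
def SeparatesPts {X : Type*} (h : Set X) (x y : X) : Prop :=
  (x ∈ h ∧ y ∈ hᶜ) ∨ (y ∈ h ∧ x ∈ hᶜ)

section MedianAux

variable {X : Type*} [MetricSpace X]

lemma mem_mInterval_left (a b : X) : a ∈ mInterval a b := by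
  simp [mInterval]

lemma mem_mInterval_right (a b : X) : b ∈ mInterval a b := by
  simp [mInterval]

lemma mInterval_symm_mem {a b x : X} (h : x ∈ mInterval a b) : x ∈ mInterval b a := by
  simp only [mInterval, Set.mem_setOf_eq] at *
  rw [dist_comm b x, dist_comm x a, dist_comm b a]
  linarith

/-- Transitivity: if `x ∈ [a,b]` and `y ∈ [a,x]` then `y ∈ [a,b]`. -/
lemma mInterval_trans {a b x y : X} (hx : x ∈ mInterval a b) (hy : y ∈ mInterval a x) :
    y ∈ mInterval a b := by
  simp only [mInterval, Set.mem_setOf_eq] at *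
  have t1 := dist_triangle a y b
  have t2 := dist_triangle y x b
  linarith

/-- The median point of a triple. -/
noncomputable def med (hm : IsMedianSpace X) (a b c : X) : X := (hm a b c).choose

lemma med_mem (hm : IsMedianSpace X) (a b c : X) :
    med hm a b c ∈ mInterval a b ∩ mInterval b c ∩ mInterval a c :=
  (hm a b c).choose_spec.1

lemma med_eq (hm : IsMedianSpace X) {a b c m : X}
    (h : m ∈ mInterval a b ∩ mInterval b c ∩ mInterval a c) : m = med hm a b c :=
  (hm a b c).choose_spec.2 m h

/-- Gate lemma: the median of `a, b, c` lies between `a` and every point of `[b,c]`. -/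
lemma med_gate (hm : IsMedianSpace X) (a : X) {b c x : X} (hx : x ∈ mInterval b c) :
    med hm a b c ∈ mInterval a x := by
  obtain ⟨⟨hab, hbx⟩, hax⟩ := med_mem hm a b x
  obtain ⟨⟨h'ax, h'xc⟩, h'ac⟩ := med_mem hm a x c
  obtain ⟨⟨pah, phh'⟩, pah'⟩ := med_mem hm a (med hm a b x) (med hm a x c)
  set h := med hm a b x
  set h' := med hm a x c
  set p := med hm a h h' with hpdef
  have p_ab : p ∈ mInterval a b := mInterval_trans hab pah
  have p_ac : p ∈ mInterval a c := mInterval_trans h'ac pah'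
  have p_ax : p ∈ mInterval a x := mInterval_trans hax pah
  have p_bc : p ∈ mInterval b c := by
    simp only [mInterval, Set.mem_setOf_eq] at hab hbx hax h'ax h'xc h'ac pah phh' pah' hx ⊢
    have t1 : dist h h' ≤ dist h x + dist x h' := dist_triangle h x h'
    have t2 : dist b p ≤ dist b h + dist h p := dist_triangle b h p
    have t3 : dist p c ≤ dist p h' + dist h' c := dist_triangle p h' c
    have t4 : dist b c ≤ dist b p + dist p c := dist_triangle b p c
    have c1 : dist h b = dist b h := dist_comm h b
    have c2 : dist p h = dist h p := dist_comm p h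
    have c3 : dist h x = dist x h := dist_comm h x
    have c4 : dist x h' = dist h' x := dist_comm x h'
    have c5 : dist b h = dist h b := dist_comm b h
    linarith
  have : p = med hm a b c := med_eq hm ⟨⟨p_ab, p_bc⟩, p_ac⟩
  rwa [this] at p_ax

/-- Cone lemma: a point between `z` and `a` and between `z` and `b` is between `z` and the
median of `z, a, b`. -/
lemma med_cone (hm : IsMedianSpace X) {z a b n : X} (hna : n ∈ mInterval z a)
    (hnb : n ∈ mInterval z b) : n ∈ mInterval z (med hm z a b) := by
  obtain ⟨⟨gza, gab⟩, gzb⟩ := med_mem hm z a b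
  obtain ⟨⟨una, uab⟩, unb⟩ := med_mem hm n a b
  set g := med hm z a b
  set u := med hm n a b
  have hgu : g ∈ mInterval z u := med_gate hm z uab
  simp only [mInterval, Set.mem_setOf_eq] at gza gab gzb una uab unb hgu hna hnb ⊢
  have t1 : dist z u ≤ dist z n + dist n u := dist_triangle z n u
  have t2 : dist n g ≤ dist n u + dist u g := dist_triangle n u g
  have t3 : dist z g ≤ dist z n + dist n g := dist_triangle z n g
  have nn : (0:ℝ) ≤ dist g u := dist_nonneg
  have c1 : dist u g = dist g u := dist_comm u g
  have c6 : dist a u = dist u a := dist_comm a u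
  have c7 : dist a g = dist g a := dist_comm a g
  linarith

/-- Join lemma: if `z ∈ [x,y]`, `x ∈ [a,b]`, `y ∈ [a',b']`, then `z` lies between
`med a a' z` and `med b b' z`. -/
lemma med_join (hm : IsMedianSpace X) {a b a' b' x y z : X}
    (hx : x ∈ mInterval a b) (hy : y ∈ mInterval a' b') (hz : z ∈ mInterval x y) :
    z ∈ mInterval (med hm a a' z) (med hm b b' z) := by
  obtain ⟨⟨αaa', αa'z⟩, αaz⟩ := med_mem hm a a' z
  obtain ⟨⟨βbb', βb'z⟩, βbz⟩ := med_mem hm b b' z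
  obtain ⟨⟨nαz, nzβ⟩, nαβ⟩ := med_mem hm (med hm a a' z) z (med hm b b' z)
  set α := med hm a a' z
  set β := med hm b b' z
  set n := med hm α z β
  have nzα : n ∈ mInterval z α := mInterval_symm_mem nαz
  have nza : n ∈ mInterval z a := mInterval_trans (mInterval_symm_mem αaz) nzα
  have nza' : n ∈ mInterval z a' := mInterval_trans (mInterval_symm_mem αa'z) nzα
  have nzb : n ∈ mInterval z b := mInterval_trans (mInterval_symm_mem βbz) nzβ
  have nzb' : n ∈ mInterval z b' := mInterval_trans (mInterval_symm_mem βb'z) nzβ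
  have nzx : n ∈ mInterval z x := mInterval_trans (med_gate hm z hx) (med_cone hm nza nzb)
  have nzy : n ∈ mInterval z y := mInterval_trans (med_gate hm z hy) (med_cone hm nza' nzb')
  simp only [mInterval, Set.mem_setOf_eq] at nzx nzy hz nαz nzβ nαβ ⊢
  have t : dist x y ≤ dist x n + dist n y := dist_triangle x n y
  have c1 : dist x n = dist n x := dist_comm x n
  have c2 : dist n y = dist y n := dist_comm n y
  have c3 : dist x z = dist z x := dist_comm x z
  have c4 : dist n z = dist z n := dist_comm n z
  have nn : (0:ℝ) ≤ dist z n := dist_nonneg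
  linarith

end MedianAux

section HullAux

variable {X : Type*} [MetricSpace X]

lemma mConvexHull_convex (A : Set X) : MConvex (mConvexHull A) := by
  intro x hx y hy z hz
  intro C hC
  exact hC.1 x (hx C hC) y (hy C hC) hz

lemma subset_mConvexHull (A : Set X) : A ⊆ mConvexHull A := fun x hx =>
  Set.mem_sInter.mpr fun C hC => hC.2 hx

lemma mConvexHull_min {A C : Set X} (hC : MConvex C) (hAC : A ⊆ C) : mConvexHull A ⊆ C :=
  Set.sInter_subset_of_mem ⟨hC, hAC⟩

lemma mConvexHull_mono {A B : Set X} (h : A ⊆ B) : mConvexHull A ⊆ mConvexHull B :=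
  mConvexHull_min (mConvexHull_convex B) (h.trans (subset_mConvexHull B))

lemma mConvex_singleton (a : X) : MConvex ({a} : Set X) := by
  intro x hx y hy z hz
  have hxa : x = a := hx
  have hya : y = a := hy
  rw [hxa, hya] at hz
  simp only [mInterval, Set.mem_setOf_eq, dist_self] at hz
  rw [dist_comm z a] at hz
  have h0 : dist a z = 0 := by linarith [dist_nonneg (x := a) (y := z)]
  exact Set.mem_singleton_iff.mpr (dist_eq_zero.mp h0).symm

lemma mConvexHull_singleton (a : X) : mConvexHull ({a} : Set X) = {a} :=
  Set.Subset.antisymm (mConvexHull_min (mConvex_singleton a) subset_rfl)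
    (subset_mConvexHull _)

/-- The join of two convex sets is convex. -/
lemma joinSet_convex (hm : IsMedianSpace X) {C₁ C₂ : Set X} (h1 : MConvex C₁) (h2 : MConvex C₂) :
    MConvex {z : X | ∃ a ∈ C₁, ∃ b ∈ C₂, z ∈ mInterval a b} := by
  rintro x ⟨a, ha, b, hb, hx⟩ y ⟨a', ha', b', hb', hy⟩ z hz
  exact ⟨med hm a a' z, h1 a ha a' ha' (med_mem hm a a' z).1.1,
         med hm b b' z, h2 b hb b' hb' (med_mem hm b b' z).1.1,
         med_join hm hx hy hz⟩

open Filter Topology in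
/-- The join of two compact sets is compact (given compact intervals). -/
lemma joinSet_compact (hm : IsMedianSpace X) (hcpt : ∀ a b : X, IsCompact (mInterval a b))
    {C₁ C₂ : Set X} (h1 : IsCompact C₁) (h2 : IsCompact C₂) :
    IsCompact {z : X | ∃ a ∈ C₁, ∃ b ∈ C₂, z ∈ mInterval a b} := by
  apply IsSeqCompact.isCompact
  intro z hz
  choose f hf g hg hzfg using hz
  obtain ⟨p, hp, φ₁, hφ₁, hfp⟩ := h1.isSeqCompact (fun n => hf n)
  obtain ⟨q, hq, φ₂, hφ₂, hgq⟩ := h2.isSeqCompact (fun n => hg (φ₁ n))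
  obtain ⟨l, hl, φ₃, hφ₃, hwl⟩ := (hcpt p q).isSeqCompact
      (fun n => (med_mem hm p (z (φ₁ (φ₂ n))) q).2)
  set ψ : ℕ → ℕ := fun n => φ₁ (φ₂ (φ₃ n)) with hψ
  refine ⟨l, ⟨p, hp, q, hq, hl⟩, ψ, hφ₁.comp (hφ₂.comp hφ₃), ?_⟩
  have key : ∀ n, dist (z (ψ n)) l ≤
      dist (f (ψ n)) p + dist (g (ψ n)) q + dist (med hm p (z (ψ n)) q) l := by
    intro n
    set w := med hm p (z (ψ n)) q with hwdef
    obtain ⟨⟨wpz, wzq⟩, wpq⟩ := med_mem hm p (z (ψ n)) q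
    have hzi := hzfg (ψ n)
    simp only [mInterval, Set.mem_setOf_eq] at wpz wzq wpq hzi
    have t0 : dist (z (ψ n)) l ≤ dist (z (ψ n)) w + dist w l := dist_triangle _ _ _
    have t1 : dist (z (ψ n)) p ≤ dist (z (ψ n)) (f (ψ n)) + dist (f (ψ n)) p :=
      dist_triangle _ _ _
    have t2 : dist (z (ψ n)) q ≤ dist (z (ψ n)) (g (ψ n)) + dist (g (ψ n)) q :=
      dist_triangle _ _ _
    have t3 : dist (f (ψ n)) (g (ψ n)) ≤ dist (f (ψ n)) p + dist p q + dist q (g (ψ n)) :=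
      dist_triangle4 _ _ _ _
    have c1 : dist p w = dist w p := dist_comm p w
    have c2 : dist w (z (ψ n)) = dist (z (ψ n)) w := dist_comm w _
    have c3 : dist p (z (ψ n)) = dist (z (ψ n)) p := dist_comm p _
    have c4 : dist (z (ψ n)) (f (ψ n)) = dist (f (ψ n)) (z (ψ n)) := dist_comm _ _
    have c5 : dist q (g (ψ n)) = dist (g (ψ n)) q := dist_comm q _
    have c6 : dist (z (ψ n)) q = dist q (z (ψ n)) := dist_comm _ _
    rw [← hwdef] at wpz wzq wpq
    linarith
  rw [tendsto_iff_dist_tendsto_zero]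
  apply squeeze_zero (fun n => dist_nonneg)
    (fun n => key n)
  have A : Tendsto (fun n => dist (f (ψ n)) p) atTop (𝓝 0) := by
    have h0 : Tendsto (fun k => dist ((f ∘ φ₁) k) p) atTop (𝓝 0) :=
      tendsto_iff_dist_tendsto_zero.mp hfp
    have := h0.comp ((hφ₂.comp hφ₃).tendsto_atTop)
    simpa [Function.comp_def, hψ] using this
  have B : Tendsto (fun n => dist (g (ψ n)) q) atTop (𝓝 0) := by
    have h0 : Tendsto (fun k => dist (((fun n => g (φ₁ n)) ∘ φ₂) k) q) atTop (𝓝 0) :=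
      tendsto_iff_dist_tendsto_zero.mp hgq
    have := h0.comp hφ₃.tendsto_atTop
    simpa [Function.comp_def, hψ] using this
  have C : Tendsto (fun n => dist (med hm p (z (ψ n)) q) l) atTop (𝓝 0) := by
    have h0 := tendsto_iff_dist_tendsto_zero.mp hwl
    simpa [Function.comp, hψ] using h0
  have := (A.add B).add C
  simpa using this

end HullAux

/-- In a complete median space with compact intervals, the convex hull of the union of two
nonempty compact convex subsets is compact; in particular the convex hull of any nonempty
finite subset is compact. -/
theorem statement11 (X : Type*) [MetricSpace X] [CompleteSpace X]
    (hmed : IsMedianSpace X) (hcpt : ∀ a b : X, IsCompact (mInterval a b)) :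
    (∀ C₁ C₂ : Set X, C₁.Nonempty → C₂.Nonempty → IsCompact C₁ → IsCompact C₂ →
      MConvex C₁ → MConvex C₂ → IsCompact (mConvexHull (C₁ ∪ C₂))) ∧
    (∀ F : Set X, F.Finite → F.Nonempty → IsCompact (mConvexHull F)) := by
  classical
  have hullconv : ∀ A : Set X, MConvex (mConvexHull A) := fun A => mConvexHull_convex A
  have main : ∀ C₁ C₂ : Set X, C₁.Nonempty → C₂.Nonempty → IsCompact C₁ → IsCompact C₂ →
      MConvex C₁ → MConvex C₂ → IsCompact (mConvexHull (C₁ ∪ C₂)) := by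
    intro C₁ C₂ hn1 hn2 hc1 hc2 hv1 hv2
    have hS : mConvexHull (C₁ ∪ C₂) = {z : X | ∃ a ∈ C₁, ∃ b ∈ C₂, z ∈ mInterval a b} := by
      apply Set.Subset.antisymm
      · apply mConvexHull_min (joinSet_convex hmed hv1 hv2)
        rintro t (ht | ht)
        · exact ⟨t, ht, hn2.choose, hn2.choose_spec, mem_mInterval_left _ _⟩
        · exact ⟨hn1.choose, hn1.choose_spec, t, ht, mem_mInterval_right _ _⟩
      · rintro t ⟨a, ha, b, hb, ht⟩
        exact hullconv _ a (subset_mConvexHull _ (Or.inl ha)) b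
          (subset_mConvexHull _ (Or.inr hb)) ht
    rw [hS]
    exact joinSet_compact hmed hcpt hc1 hc2
  refine ⟨main, ?_⟩
  intro F hF
  refine Set.Finite.induction_on
    (motive := fun s _ => s.Nonempty → IsCompact (mConvexHull s)) F hF
    (fun h => absurd h (by simp)) ?_
  intro a s ha hs ih
  · intro _
    rcases s.eq_empty_or_nonempty with rfl | hsne
    · have he : insert a (∅ : Set X) = {a} := by simp
      rw [he, mConvexHull_singleton]
      exact isCompact_singleton
    · have hK : IsCompact (mConvexHull s) := ih hsne
      have hKne : (mConvexHull s).Nonempty := hsne.mono (subset_mConvexHull s)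
      have h₁ : mConvexHull (insert a s) = mConvexHull ({a} ∪ mConvexHull s) := by
        apply Set.Subset.antisymm
        · apply mConvexHull_mono
          rw [Set.insert_eq]
          exact Set.union_subset_union_right _ (subset_mConvexHull s)
        · apply mConvexHull_min (hullconv _)
          apply Set.union_subset
          · exact Set.singleton_subset_iff.mpr (subset_mConvexHull _ (Set.mem_insert a s))
          · exact mConvexHull_min (hullconv _)
              ((subset_mConvexHull _).trans
                (mConvexHull_mono (Set.subset_insert a s))) |>.trans
              (le_refl _)
      rw [h₁]
      exact main {a} (mConvexHull s) ⟨a, rfl⟩ hKne isCompact_singleton hK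
        (mConvex_singleton a) (hullconv s)
end

section
/- Let X be a complete connected median space of finite rank, let x₀ ∈ X, let g be a surjective isometry of X with g(x₀) = x₀, and let h be a closed halfspace of X with x₀ ∈ hᶜ. If g(h) ⊆ h then g(h) = h; consequently the halfspaces h and g(h) are either equal, transverse, or disjoint. -/
/-- uniqueness of nearest point -/
lemma aux_unique {X : Type*} [MetricSpace X] (hmed : IsMedianSpace X)
    {C : Set X} (hC : MConvex C) {x₀ p q : X} (hp : p ∈ C) (hq : q ∈ C)
    (hdp : dist x₀ p = Metric.infDist x₀ C) (hdq : dist x₀ q = Metric.infDist x₀ C) :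
    p = q := by
  obtain ⟨w, hw, -⟩ := hmed p q x₀
  have hwC : C ∈ ({C} : Set (Set X)) := rfl
  have hwC' : w ∈ C := hC p hp q hq hw.1.1
  have hwr : Metric.infDist x₀ C ≤ dist w x₀ := by
    rw [dist_comm]; exact Metric.infDist_le_dist_of_mem hwC'
  have h1 : dist p w + dist w x₀ = dist p x₀ := hw.2
  have h2 : dist q w + dist w x₀ = dist q x₀ := hw.1.2
  have hp0 : dist p w = 0 := by
    have := dist_comm x₀ p ▸ hdp
    linarith [dist_nonneg (x := p) (y := w), dist_comm p x₀ ▸ hdp]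
  have hq0 : dist q w = 0 := by
    linarith [dist_nonneg (x := q) (y := w), dist_comm q x₀ ▸ hdq]
  have := dist_eq_zero.mp hp0
  have := dist_eq_zero.mp hq0
  simp_all

/-- gate property -/
lemma aux_gate {X : Type*} [MetricSpace X] (hmed : IsMedianSpace X)
    {C : Set X} (hC : MConvex C) {x₀ p : X} (hp : p ∈ C)
    (hdp : dist x₀ p = Metric.infDist x₀ C) {y : X} (hy : y ∈ C) :
    p ∈ mInterval x₀ y := by
  obtain ⟨w, hw, -⟩ := hmed p y x₀
  have hwC : w ∈ C := hC p hp y hy hw.1.1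
  have hwr : Metric.infDist x₀ C ≤ dist w x₀ := by
    rw [dist_comm]; exact Metric.infDist_le_dist_of_mem hwC
  have h1 : dist p w + dist w x₀ = dist p x₀ := hw.2
  have hp0 : dist p w = 0 := by
    linarith [dist_nonneg (x := p) (y := w), dist_comm p x₀ ▸ hdp]
  have hpw : p = w := dist_eq_zero.mp hp0
  have h2 : dist y w + dist w x₀ = dist y x₀ := hw.1.2
  show dist x₀ p + dist p y = dist x₀ y
  rw [hpw]
  rw [dist_comm x₀ w, dist_comm w y, dist_comm x₀ y]
  linarith

/-- existence of nearest point -/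
lemma aux_exists_proj {X : Type*} [MetricSpace X] [CompleteSpace X]
    (hmed : IsMedianSpace X) {C : Set X} (hC : MConvex C) (hcl : IsClosed C)
    (hne : C.Nonempty) (x₀ : X) :
    ∃ p ∈ C, dist x₀ p = Metric.infDist x₀ C := by
  set r := Metric.infDist x₀ C with hr
  have hseq : ∀ n : ℕ, ∃ x ∈ C, dist x₀ x < r + 1/(n+1) := by
    intro n
    have hlt : r < r + 1/(n+1) := by
      have : (0:ℝ) < 1/(n+1) := by positivity
      linarith
    exact (Metric.infDist_lt_iff hne).mp hlt
  choose u hu hud using hseq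
  have hlb : ∀ n, r ≤ dist x₀ (u n) := fun n => Metric.infDist_le_dist_of_mem (hu n)
  have key2 : ∀ m n : ℕ, dist (u m) (u n) ≤ 1/(m+1) + 1/(n+1) := by
    intro m n
    obtain ⟨w, hw, -⟩ := hmed (u m) (u n) x₀
    have hwC : w ∈ C := hC _ (hu m) _ (hu n) hw.1.1
    have hwr : r ≤ dist w x₀ := by
      rw [dist_comm]; exact Metric.infDist_le_dist_of_mem hwC
    have h1 : dist (u m) w + dist w x₀ = dist (u m) x₀ := hw.2
    have h2 : dist (u n) w + dist w x₀ = dist (u n) x₀ := hw.1.2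
    have hm : dist (u m) x₀ < r + 1/(m+1) := by rw [dist_comm]; exact hud m
    have hn : dist (u n) x₀ < r + 1/(n+1) := by rw [dist_comm]; exact hud n
    calc dist (u m) (u n) ≤ dist (u m) w + dist w (u n) := dist_triangle _ _ _
      _ = dist (u m) w + dist (u n) w := by rw [dist_comm w]
      _ ≤ 1/(m+1) + 1/(n+1) := by linarith
  have hcau : CauchySeq u := by
    rw [Metric.cauchySeq_iff]
    intro ε hε
    obtain ⟨N, hN⟩ := exists_nat_one_div_lt (half_pos hε)
    refine ⟨N, fun m hm n hn => ?_⟩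
    have h1 : (1:ℝ)/(m+1) ≤ 1/(N+1) := by
      apply one_div_le_one_div_of_le (by positivity)
      exact_mod_cast Nat.succ_le_succ hm
    have h2 : (1:ℝ)/(n+1) ≤ 1/(N+1) := by
      apply one_div_le_one_div_of_le (by positivity)
      exact_mod_cast Nat.succ_le_succ hn
    calc dist (u m) (u n) ≤ 1/(m+1) + 1/(n+1) := key2 m n
      _ < ε := by linarith
  obtain ⟨p, hp⟩ := cauchySeq_tendsto_of_complete hcau
  have hpC : p ∈ C := hcl.mem_of_tendsto hp (Filter.Eventually.of_forall hu)
  refine ⟨p, hpC, le_antisymm ?_ (Metric.infDist_le_dist_of_mem hpC)⟩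
  have ht : Filter.Tendsto (fun n => dist x₀ (u n)) Filter.atTop (nhds (dist x₀ p)) :=
    Filter.Tendsto.dist tendsto_const_nhds hp
  have hlim2 : Filter.Tendsto (fun n : ℕ => r + 1/(n+1)) Filter.atTop (nhds r) := by
    have : Filter.Tendsto (fun n : ℕ => 1 / ((n : ℝ) + 1)) Filter.atTop (nhds 0) :=
      tendsto_one_div_add_atTop_nhds_zero_nat
    simpa using (tendsto_const_nhds (x := r)).add this
  exact le_of_tendsto_of_tendsto' ht hlim2 (fun n => (hud n).le)

lemma aux_image_interval {X : Type*} [MetricSpace X] {g : X → X} (hg : Isometry g)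
    (hgs : Function.Surjective g) (a b : X) :
    mInterval (g a) (g b) = g '' mInterval a b := by
  ext z
  constructor
  · intro hz
    obtain ⟨w, rfl⟩ := hgs z
    exact ⟨w, by simpa [mInterval, hg.dist_eq] using hz, rfl⟩
  · rintro ⟨w, hw, rfl⟩
    simpa [mInterval, hg.dist_eq] using hw

lemma aux_mconvex_image {X : Type*} [MetricSpace X] {g : X → X} (hg : Isometry g)
    (hgs : Function.Surjective g) {C : Set X} (hC : MConvex C) : MConvex (g '' C) := by
  rintro a ⟨a', ha', rfl⟩ b ⟨b', hb', rfl⟩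
  rw [aux_image_interval hg hgs]
  exact Set.image_mono (hC a' ha' b' hb')

lemma aux_key {X : Type*} [MetricSpace X] [CompleteSpace X]
    (hmed : IsMedianSpace X) (x₀ : X) (g : X → X) (hg : Isometry g)
    (hgs : Function.Surjective g) (hgx₀ : g x₀ = x₀)
    (h : Set X) (hh : IsHalfspace h) (hcl : IsClosed h) (hx₀ : x₀ ∈ hᶜ)
    (hsub : g '' h ⊆ h) : g '' h = h := by
  rcases h.eq_empty_or_nonempty with rfl | hne
  · simp
  obtain ⟨p, hpC, hdp⟩ := aux_exists_proj hmed hh.1 hcl hne x₀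
  have hgp : g p ∈ h := hsub ⟨p, hpC, rfl⟩
  have hdgp : dist x₀ (g p) = Metric.infDist x₀ h := by
    calc dist x₀ (g p) = dist (g x₀) (g p) := by rw [hgx₀]
      _ = dist x₀ p := hg.dist_eq _ _
      _ = _ := hdp
  have hfix : g p = p := aux_unique hmed hh.1 hgp hpC hdgp hdp
  refine subset_antisymm hsub fun y hy => ?_
  by_contra hyn
  have hbij : Function.Bijective g := ⟨hg.injective, hgs⟩
  have hcomp : MConvex (g '' h)ᶜ := by
    rw [← Set.image_compl_eq hbij]
    exact aux_mconvex_image hg hgs hh.2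
  have hx₀' : x₀ ∈ (g '' h)ᶜ := fun hx => hx₀ (hsub hx)
  have hpint : p ∈ mInterval x₀ y := aux_gate hmed hh.1 hpC hdp hy
  exact hcomp x₀ hx₀' y hyn hpint ⟨p, hpC, hfix⟩

/-- In a complete connected median space of finite rank, if `g` is a surjective isometry
fixing `x₀` and `h` is a closed halfspace with `x₀ ∈ hᶜ`, then `g(h) ⊆ h` implies
`g(h) = h`; consequently `h` and `g(h)` are equal, transverse, or disjoint. -/
theorem statement18 (X : Type*) [MetricSpace X] [CompleteSpace X] [ConnectedSpace X]
    (hmed : IsMedianSpace X) (hrank : ∃ n : ℕ, HasMedianRank X n)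
    (x₀ : X) (g : X → X) (hg : Isometry g) (hgs : Function.Surjective g)
    (hgx₀ : g x₀ = x₀)
    (h : Set X) (hh : IsHalfspace h) (hcl : IsClosed h) (hx₀ : x₀ ∈ hᶜ) :
    (g '' h ⊆ h → g '' h = h) ∧
    (g '' h = h ∨ TransverseSets h (g '' h) ∨ Disjoint h (g '' h)) := by

  have hbij : Function.Bijective g := ⟨hg.injective, hgs⟩
  have key : g '' h ⊆ h → g '' h = h :=
    aux_key hmed x₀ g hg hgs hgx₀ h hh hcl hx₀
  refine ⟨key, ?_⟩
  by_cases h1 : (h ∩ g '' h).Nonempty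
  · by_cases h2 : (hᶜ ∩ g '' h).Nonempty
    · by_cases h3 : (h ∩ (g '' h)ᶜ).Nonempty
      · by_cases h4 : (hᶜ ∩ (g '' h)ᶜ).Nonempty
        · exact Or.inr (Or.inl ⟨h1, h2, h3, h4⟩)
        · exfalso
          apply h4
          refine ⟨x₀, hx₀, fun hx => ?_⟩
          obtain ⟨y, hy, hyx⟩ := hx
          have : y = x₀ := hg.injective (by rw [hyx, hgx₀])
          exact hx₀ (this ▸ hy)
      · -- h ⊆ g '' h
        left
        have hsub : h ⊆ g '' h := fun z hz => by
          by_contra hzn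
          exact h3 ⟨z, hz, hzn⟩
        set e := Equiv.ofBijective g hbij with he
        have hgse : ∀ x, g (e.symm x) = x := fun x => e.apply_symm_apply x
        have hiso : Isometry (e.symm : X → X) := Isometry.of_dist_eq fun a b => by
          calc dist (e.symm a) (e.symm b)
              = dist (g (e.symm a)) (g (e.symm b)) := (hg.dist_eq _ _).symm
            _ = dist a b := by rw [hgse, hgse]
        have hsurj : Function.Surjective (e.symm : X → X) := e.symm.surjective
        have hfix : e.symm x₀ = x₀ := by
          rw [Equiv.symm_apply_eq]
          exact hgx₀.symm
        have hsub' : e.symm '' h ⊆ h := by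
          rintro _ ⟨a, ha, rfl⟩
          obtain ⟨b, hb, hba⟩ := hsub ha
          have : e.symm a = b := by rw [← hba]; exact e.symm_apply_apply b
          exact this ▸ hb
        have heq : e.symm '' h = h :=
          aux_key hmed x₀ (e.symm : X → X) hiso hsurj hfix h hh hcl hx₀ hsub'
        have : g '' (e.symm '' h) = g '' h := by rw [heq]
        rw [← this, ← Set.image_comp]
        have hcomp : g ∘ (e.symm : X → X) = id := funext hgse
        rw [hcomp, Set.image_id]
    · -- g '' h ⊆ h
      left
      apply key
      intro z hz
      by_contra hzn
      exact h2 ⟨z, hzn, hz⟩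
  · exact Or.inr (Or.inr (Set.disjoint_iff_inter_eq_empty.mpr
      (Set.not_nonempty_iff_eq_empty.mp h1)))
end
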